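/- If p(z)/q(z) is a scalar rational function of d complex variables with real coefficients, homogeneous of degree 1 (i.e. p has degree one more than q as forms), and Re(p(z)/q(z)) ≥ 0 whenever Re z₁ > 0, …, Re z_d > 0 and q(z) ≠ 0, then for every k = 1, …, d the partial Wronskian W_k(x) = q(x)·∂p/∂x_k(x) − p(x)·∂q/∂x_k(x) is nonnegative for all x ∈ ℝ^d. -/

import Mathlib

open MvPolynomial

open Polynomial Complex in
private lemma coeff_one_mul' (P Q : Polynomial ℂ) :
    (P * Q).coeff 1 = P.coeff 0 * Q.coeff 1 + P.coeff 1 * Q.coeff 0 := by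
  rw [Polynomial.coeff_mul, Finset.Nat.antidiagonal_succ, Finset.sum_cons]
  simp [add_comm]

private lemma eval_homog_smul {σ : Type*} {n : ℕ} {φ : MvPolynomial σ ℂ}
    (h : φ.IsHomogeneous n) (c : ℂ) (w : σ → ℂ) :
    MvPolynomial.eval (fun i => c * w i) φ = c ^ n * MvPolynomial.eval w φ := by
  rw [MvPolynomial.eval_eq, MvPolynomial.eval_eq, Finset.mul_sum]
  refine Finset.sum_congr rfl fun m hm => ?_
  have hdeg : ∑ i ∈ m.support, m i = n := by
    have h2 := h (MvPolynomial.mem_support_iff.mp hm)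
    simpa [Finsupp.weight_apply, Finsupp.sum] using h2
  rw [show (∏ i ∈ m.support, (c * w i) ^ m i)
      = (∏ i ∈ m.support, c ^ m i) * ∏ i ∈ m.support, w i ^ m i by
    rw [← Finset.prod_mul_distrib]; exact Finset.prod_congr rfl fun i _ => mul_pow _ _ _]
  rw [Finset.prod_pow_eq_pow_sum, hdeg]
  ring

private noncomputable def subst {d : ℕ} (k : Fin d) (x : Fin d → ℝ) (c : ℂ) :
    Fin d → Polynomial ℂ := fun j =>
  Polynomial.C ((x j : ℂ)) + Polynomial.C c * Polynomial.X ^ 2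
    + (if j = k then Polynomial.C c * Polynomial.X else 0)

private lemma subst_coeff0 {d : ℕ} (k : Fin d) (x : Fin d → ℝ) (c : ℂ) (j : Fin d) :
    (subst k x c j).coeff 0 = (x j : ℂ) := by
  simp [subst, Polynomial.coeff_X_pow]
  split <;> simp

private lemma subst_coeff1 {d : ℕ} (k : Fin d) (x : Fin d → ℝ) (c : ℂ) (j : Fin d) :
    (subst k x c j).coeff 1 = if j = k then c else 0 := by
  simp [subst, Polynomial.coeff_X_pow]
  split <;> simp

private lemma aux_coeff {d : ℕ} (k : Fin d) (x : Fin d → ℝ) (c : ℂ)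
    (p : MvPolynomial (Fin d) ℝ) :
    ((MvPolynomial.aeval (subst k x c) p).coeff 0 = ((MvPolynomial.eval x p : ℝ) : ℂ))
    ∧ ((MvPolynomial.aeval (subst k x c) p).coeff 1
        = c * ((MvPolynomial.eval x (pderiv k p) : ℝ) : ℂ)) := by
  induction p using MvPolynomial.induction_on with
  | C a =>
      constructor <;> simp [MvPolynomial.aeval_C, Polynomial.coeff_C, pderiv_C,
        MvPolynomial.algebraMap_eq]
  | add p q hp hq =>
      obtain ⟨hp0, hp1⟩ := hp
      obtain ⟨hq0, hq1⟩ := hq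
      constructor <;> simp [hp0, hp1, hq0, hq1] <;> push_cast <;> ring
  | mul_X p j hp =>
      obtain ⟨hp0, hp1⟩ := hp
      have hm : (MvPolynomial.aeval (subst k x c)) (p * X j)
          = (MvPolynomial.aeval (subst k x c)) p * subst k x c j := by
        simp
      constructor
      · rw [hm, Polynomial.mul_coeff_zero, hp0, subst_coeff0]
        push_cast; simp
      · rw [hm, coeff_one_mul', hp0, hp1, subst_coeff0, subst_coeff1, pderiv_mul]
        rcases eq_or_ne j k with h | h
        · subst h; simp
          push_cast; ring
        · simp [h, pderiv_X_of_ne (Ne.symm h)]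
          push_cast; ring

private lemma bridge {d : ℕ} (f : Fin d → Polynomial ℂ) (δ : ℂ)
    (p : MvPolynomial (Fin d) ℝ) :
    Polynomial.eval δ (MvPolynomial.aeval f p)
      = MvPolynomial.aeval (fun j => Polynomial.eval δ (f j)) p := by
  have := MvPolynomial.comp_aeval_apply (R := ℝ) (f := f)
    ((Polynomial.aeval δ : Polynomial ℂ →ₐ[ℂ] ℂ).restrictScalars ℝ) p
  simpa using this

private lemma conj_bridge {d : ℕ} (f : Fin d → Polynomial ℂ) (δ : ℂ)
    (p : MvPolynomial (Fin d) ℝ) :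
    (starRingEnd ℂ) (Polynomial.eval δ (MvPolynomial.aeval f p))
      = MvPolynomial.aeval (fun j => (starRingEnd ℂ) (Polynomial.eval δ (f j))) p := by
  have := MvPolynomial.comp_aeval_apply (R := ℝ) (f := f)
    ((Complex.conjAe.toAlgHom : ℂ →ₐ[ℝ] ℂ).comp
      ((Polynomial.aeval δ : Polynomial ℂ →ₐ[ℂ] ℂ).restrictScalars ℝ)) p
  simpa using this

open Complex in
private lemma stepA {d n : ℕ} (p q : MvPolynomial (Fin d) ℝ)
    (hp : p.IsHomogeneous (n + 1)) (hq : q.IsHomogeneous n)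
    (hpos : ∀ z : Fin d → ℂ, (∀ k, 0 < (z k).re) → aeval z q ≠ 0 →
      0 ≤ ((aeval z p) / (aeval z q)).re)
    (w : Fin d → ℂ) (hw : ∀ j, (w j).im < 0) :
    (MvPolynomial.aeval w p * (starRingEnd ℂ) (MvPolynomial.aeval w q)).im ≤ 0 := by
  set A := MvPolynomial.aeval w p with hA
  set B := MvPolynomial.aeval w q with hB
  by_cases hB0 : B = 0
  · simp [hB0]
  -- rotated point
  set z : Fin d → ℂ := fun j => I * w j with hz
  have hzre : ∀ j, 0 < (z j).re := by
    intro j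
    simpa [hz, Complex.mul_re] using hw j
  have haev : ∀ (m : ℕ) (r : MvPolynomial (Fin d) ℝ), r.IsHomogeneous m →
      MvPolynomial.aeval z r = I ^ m * MvPolynomial.aeval w r := by
    intro m r hr
    have hmap : (MvPolynomial.map (algebraMap ℝ ℂ) r).IsHomogeneous m := hr.map _
    have e1 : MvPolynomial.aeval z r
        = MvPolynomial.eval z (MvPolynomial.map (algebraMap ℝ ℂ) r) := by
      rw [MvPolynomial.aeval_def, MvPolynomial.eval₂_eq_eval_map]
    have e2 : MvPolynomial.aeval w r
        = MvPolynomial.eval w (MvPolynomial.map (algebraMap ℝ ℂ) r) := by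
      rw [MvPolynomial.aeval_def, MvPolynomial.eval₂_eq_eval_map]
    rw [e1, e2, hz]
    exact eval_homog_smul hmap I w
  have hzq : MvPolynomial.aeval z q = I ^ n * B := haev n q hq
  have hzp : MvPolynomial.aeval z p = I ^ (n + 1) * A := haev (n + 1) p hp
  have hzq0 : MvPolynomial.aeval z q ≠ 0 := by
    rw [hzq]
    exact mul_ne_zero (pow_ne_zero _ I_ne_zero) hB0
  have hre := hpos z hzre hzq0
  rw [hzp, hzq] at hre
  have hdiv : (I ^ (n + 1) * A) / (I ^ n * B) = I * (A / B) := by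
    rw [pow_succ]
    rw [show I ^ n * I * A = I ^ n * (I * A) by ring]
    rw [mul_div_mul_left _ _ (pow_ne_zero _ I_ne_zero), mul_div_assoc]
  rw [hdiv] at hre
  have him : (A / B).im ≤ 0 := by
    have : (I * (A / B)).re = -(A / B).im := by
      simp [Complex.mul_re]
    linarith [hre, this ▸ hre]
  have hfac : A * (starRingEnd ℂ) B = (A / B) * ((normSq B : ℝ) : ℂ) := by
    rw [← Complex.mul_conj, ← mul_assoc, div_mul_cancel₀ _ hB0]
  rw [hfac]
  rw [show ((A / B) * ((normSq B : ℝ) : ℂ)).im = (A / B).im * normSq B by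
    simp [Complex.mul_im]]
  exact mul_nonpos_of_nonpos_of_nonneg him (normSq_nonneg B)

open Complex in
theorem wronskians_nonneg_of_positive_real
    {d n : ℕ} (p q : MvPolynomial (Fin d) ℝ)
    (hp : p.IsHomogeneous (n + 1)) (hq : q.IsHomogeneous n) (hq0 : q ≠ 0)
    (hpos : ∀ z : Fin d → ℂ, (∀ k, 0 < (z k).re) → aeval z q ≠ 0 →
      0 ≤ ((aeval z p) / (aeval z q)).re) :
    ∀ (k : Fin d) (x : Fin d → ℝ),
      0 ≤ eval x (q * pderiv k p - p * pderiv k q) := by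
  intro k x
  set P : Polynomial ℂ := MvPolynomial.aeval (subst k x (-I)) p with hP
  set Qc : Polynomial ℂ := MvPolynomial.aeval (subst k x I) q with hQc
  set F : Polynomial ℂ := P * Qc with hF
  -- evaluation formula
  have hQconj : ∀ δ : ℝ, Polynomial.eval (δ : ℂ) Qc
      = (starRingEnd ℂ) (Polynomial.eval (δ : ℂ) (MvPolynomial.aeval (subst k x (-I)) q)) := by
    intro δ
    have hfun : (fun j => Polynomial.eval (δ : ℂ) (subst k x I j))
        = fun j => (starRingEnd ℂ) (Polynomial.eval (δ : ℂ) (subst k x (-I) j)) := by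
      funext j
      rcases eq_or_ne j k with h | h <;> simp [subst, h, Complex.conj_ofReal]
    rw [conj_bridge, hQc, bridge, hfun]
  -- Step A inequality
  have h1 : ∀ δ : ℝ, 0 < δ → (Polynomial.eval (δ : ℂ) F).im ≤ 0 := by
    intro δ hδ
    rw [hF, Polynomial.eval_mul, hQconj δ, hP, bridge, bridge]
    set w : Fin d → ℂ := fun j => Polynomial.eval (δ : ℂ) (subst k x (-I) j) with hwdef
    have hw : ∀ j, (w j).im < 0 := by
      intro j
      rcases eq_or_ne j k with h | h
      · have hwj : w j = (x j : ℂ) + (-I) * (δ : ℂ) ^ 2 + (-I) * (δ : ℂ) := by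
          simp [hwdef, subst, h]
        rw [hwj]
        simp [Complex.add_im, Complex.mul_im, Complex.mul_re, pow_two,
          Complex.I_re, Complex.I_im, Complex.ofReal_re, Complex.ofReal_im]
        nlinarith
      · have hwj : w j = (x j : ℂ) + (-I) * (δ : ℂ) ^ 2 := by
          simp [hwdef, subst, h]
        rw [hwj]
        simp [Complex.add_im, Complex.mul_im, Complex.mul_re, pow_two,
          Complex.I_re, Complex.I_im, Complex.ofReal_re, Complex.ofReal_im]
        nlinarith
    exact stepA p q hp hq hpos w hw
  -- coefficients of F
  obtain ⟨hP0, hP1⟩ := aux_coeff k x (-I) p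
  obtain ⟨hQ0, hQ1⟩ := aux_coeff k x I q
  rw [← hP] at hP0 hP1
  rw [← hQc] at hQ0 hQ1
  set a : ℝ := MvPolynomial.eval x p with ha
  set b : ℝ := MvPolynomial.eval x q with hb
  set a' : ℝ := MvPolynomial.eval x (pderiv k p) with ha'
  set b' : ℝ := MvPolynomial.eval x (pderiv k q) with hb'
  have hc0 : F.coeff 0 = ((a * b : ℝ) : ℂ) := by
    rw [hF, Polynomial.mul_coeff_zero, hP0, hQ0]; push_cast; ring
  have hc1 : F.coeff 1 = I * (((a * b' - a' * b : ℝ)) : ℂ) := by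
    rw [hF, coeff_one_mul', hP0, hP1, hQ0, hQ1]; push_cast; ring
  -- decompose F
  have hdvd : (Polynomial.X : Polynomial ℂ) ^ 2 ∣
      F - Polynomial.C (F.coeff 0) - Polynomial.C (F.coeff 1) * Polynomial.X := by
    rw [Polynomial.X_pow_dvd_iff]
    intro e he
    interval_cases e <;>
      simp [Polynomial.coeff_C, Polynomial.coeff_C_mul, Polynomial.coeff_X]
  obtain ⟨R, hR⟩ := hdvd
  rw [hc0, hc1] at hR
  have hFe : F = Polynomial.C (((a * b : ℝ) : ℂ))
      + Polynomial.C (I * (((a * b' - a' * b : ℝ)) : ℂ)) * Polynomial.X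
      + Polynomial.X ^ 2 * R := by
    linear_combination hR
  have hFeval : ∀ δ : ℂ, Polynomial.eval δ F
      = ((a * b : ℝ) : ℂ) + I * (((a * b' - a' * b : ℝ)) : ℂ) * δ
        + δ ^ 2 * Polynomial.eval δ R := by
    intro δ
    rw [hFe, Polynomial.eval_add, Polynomial.eval_add, Polynomial.eval_mul,
      Polynomial.eval_mul, Polynomial.eval_C, Polynomial.eval_C, Polynomial.eval_X,
      Polynomial.eval_pow, Polynomial.eval_X]
  -- the inequality on the linear coefficient
  have h2 : ∀ δ : ℝ, 0 < δ →
      (a * b' - a' * b) + δ * (Polynomial.eval (δ : ℂ) R).im ≤ 0 := by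
    intro δ hδ
    have h3 := h1 δ hδ
    rw [hFeval] at h3
    have h4 : δ * ((a * b' - a' * b) + δ * (Polynomial.eval (δ : ℂ) R).im) ≤ δ * 0 := by
      rw [mul_zero]
      have him : (((a * b : ℝ) : ℂ) + I * (((a * b' - a' * b : ℝ)) : ℂ) * (δ : ℂ)
          + (δ : ℂ) ^ 2 * Polynomial.eval (δ : ℂ) R).im
          = δ * (a * b' - a' * b) + δ ^ 2 * (Polynomial.eval (δ : ℂ) R).im := by
        simp [Complex.add_im, Complex.mul_im, Complex.mul_re, pow_two,
          Complex.I_re, Complex.I_im, Complex.ofReal_re, Complex.ofReal_im]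
        ring
      rw [him] at h3
      nlinarith
    have := le_of_mul_le_mul_left h4 hδ
    linarith
  -- pass to the limit δ → 0⁺
  have hcont : Continuous fun δ : ℝ =>
      (a * b' - a' * b) + δ * (Polynomial.eval (δ : ℂ) R).im := by
    apply continuous_const.add
    apply continuous_id.mul
    exact Complex.continuous_im.comp ((R.continuous_aeval).comp Complex.continuous_ofReal)
  have hlim : Filter.Tendsto (fun δ : ℝ =>
      (a * b' - a' * b) + δ * (Polynomial.eval (δ : ℂ) R).im)
      (nhdsWithin 0 (Set.Ioi 0)) (nhds (a * b' - a' * b)) := by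
    have h5 := (hcont.tendsto 0).mono_left (nhdsWithin_le_nhds (s := Set.Ioi (0:ℝ)))
    simpa using h5
  have hfinal : (a * b' - a' * b) ≤ 0 := by
    refine le_of_tendsto hlim ?_
    filter_upwards [self_mem_nhdsWithin] with δ hδ
    exact h2 δ hδ
  have : MvPolynomial.eval x (q * pderiv k p - p * pderiv k q) = b * a' - a * b' := by
    simp [ha, hb, ha', hb']
  rw [this]
  linarith
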